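/- For every integer n ≥ 10, setting m = ⌊(π/√2)√n⌋, one has cos(3π/m) − cos(4π/m) > 4/n; that is, the gap x_4^{CL} − x_3^{CL} between the fourth and fifth Chebyshev–Lobatto nodes exceeds twice the equispaced grid spacing 2/n. -/

import Mathlib

open Real

set_option maxHeartbeats 1000000 in
/-- For every `n ≥ 10`, with `m = ⌊(π/√2)√n⌋`, one has
`cos(3π/m) − cos(4π/m) > 4/n`, i.e. the gap `x_4^{CL} − x_3^{CL}` between the
fourth and fifth Chebyshev–Lobatto nodes exceeds twice the grid spacing `2/n`. -/
theorem chebyshev_gap_exceeds_twice_spacing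
    (n : ℕ) (hn : 10 ≤ n) (m : ℕ)
    (hm : m = ⌊Real.pi / Real.sqrt 2 * Real.sqrt n⌋₊) :
    Real.cos (3 * Real.pi / m) - Real.cos (4 * Real.pi / m) > 4 / (n : ℝ) := by
  have hpi : (3.141592 : ℝ) < π := pi_gt_d6
  have hpi' : π < 3.15 := pi_lt_d2
  have hs2 : Real.sqrt 2 < 1.415 := by
    rw [show (1.415 : ℝ) = Real.sqrt (1.415 ^ 2) by rw [Real.sqrt_sq]; norm_num]
    exact Real.sqrt_lt_sqrt (by norm_num) (by norm_num)
  have hs2pos : (0:ℝ) < Real.sqrt 2 := Real.sqrt_pos.2 (by norm_num)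
  have hn' : (10:ℝ) ≤ (n:ℝ) := by exact_mod_cast hn
  have hsn : (3.16:ℝ) < Real.sqrt n := by
    have : (3.16:ℝ) = Real.sqrt (3.16 ^ 2) := by rw [Real.sqrt_sq]; norm_num
    rw [this]
    exact Real.sqrt_lt_sqrt (by norm_num) (by nlinarith)
  -- m ≥ 7
  have h7 : (7:ℝ) ≤ π / Real.sqrt 2 * Real.sqrt n := by
    have h1 : (2.22:ℝ) < π / Real.sqrt 2 := by
      rw [lt_div_iff₀ hs2pos]; nlinarith
    nlinarith [Real.sqrt_nonneg (n:ℝ)]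
  have hm7 : 7 ≤ m := by
    rw [hm]
    exact_mod_cast Nat.le_floor (by exact_mod_cast h7)
  have hmpos : (0:ℝ) < m := by positivity
  have hm7' : (7:ℝ) ≤ m := by exact_mod_cast hm7
  -- m ≤ π/√2 √n, hence m² ≤ π²n/2
  have hmle : (m:ℝ) ≤ π / Real.sqrt 2 * Real.sqrt n := by
    rw [hm]; exact Nat.floor_le (by positivity)
  have hsq : (m:ℝ)^2 ≤ π^2 * n / 2 := by
    have h1 : (m:ℝ)^2 ≤ (π / Real.sqrt 2 * Real.sqrt n)^2 := by
      apply pow_le_pow_left₀ (by positivity) hmle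
    have h2 : (Real.sqrt 2)^2 = 2 := Real.sq_sqrt (by norm_num)
    have h3 : (Real.sqrt (n:ℝ))^2 = n := Real.sq_sqrt (by positivity)
    calc (m:ℝ)^2 ≤ (π / Real.sqrt 2 * Real.sqrt n)^2 := h1
      _ = π^2 * n / 2 := by rw [mul_pow, div_pow, h2, h3]; ring
  -- set a = π/(2m)
  set a : ℝ := π / (2 * m) with ha
  have hpipos := pi_pos
  have hapos : 0 < a := by positivity
  have ha14 : a ≤ π / 14 := by
    rw [ha, div_le_div_iff₀ (by positivity) (by norm_num)]
    nlinarith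
  have ha1 : a ≤ 1 := by nlinarith
  have ha2 : a^2 ≤ (π/14)^2 := by nlinarith
  have ha2' : a^2 ≤ 0.0507 := by nlinarith
  -- cos difference as product of sines
  have hcos : Real.cos (3 * π / m) - Real.cos (4 * π / m)
      = 2 * Real.sin (7 * a) * Real.sin a := by
    rw [Real.cos_sub_cos]
    have e1 : (3 * π / m + 4 * π / m) / 2 = 7 * a := by rw [ha]; ring
    have e2 : (3 * π / m - 4 * π / m) / 2 = -a := by rw [ha]; ring
    rw [e1, e2, Real.sin_neg]; ring
  rw [hcos]
  -- lower bounds on sines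
  have h7a : 7 * a ≤ π / 2 := by
    have e : 7 * a = 7 * π / (2 * m) := by rw [ha]; ring
    rw [e, div_le_div_iff₀ (by positivity) (by norm_num)]
    nlinarith
  have hsin7 : 2 / π * (7 * a) ≤ Real.sin (7 * a) :=
    Real.mul_le_sin (by positivity) h7a
  have hsina : a - a ^ 3 / 4 < Real.sin a := by
    have := Real.sin_gt_sub_cube hapos; nlinarith [pow_pos hapos 3]
  -- key product bound: sin(7a) sin(a) > 4 a²
  have hkey : 4 * a^2 < Real.sin (7 * a) * Real.sin a := by
    have h1 : (0:ℝ) < a - a^3/4 := by nlinarith [mul_nonneg (mul_nonneg hapos.le (sub_nonneg.2 ha1)) (by linarith : (0:ℝ) ≤ 1 + a)]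
    have hb : (0:ℝ) < Real.sin (7 * a) :=
      lt_of_lt_of_le (by positivity) hsin7
    have h2 : 2 / π * (7 * a) * (a - a^3/4) < Real.sin (7*a) * Real.sin a :=
      mul_lt_mul' hsin7 hsina h1.le hb
    have h3 : 4 * a^2 < 2 / π * (7 * a) * (a - a^3/4) := by
      rw [div_mul_eq_mul_div, div_mul_eq_mul_div, lt_div_iff₀ hpipos]
      nlinarith [mul_pos hapos hapos,
        mul_le_mul_of_nonneg_left ha2' (sq_nonneg a)]
    linarith
  -- 4/n ≤ 2π²/m² = 8a²
  have hnpos : (0:ℝ) < n := by linarith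
  have hfin : 4 / (n:ℝ) ≤ 2 * π^2 / (m:ℝ)^2 := by
    rw [div_le_div_iff₀ hnpos (by positivity)]
    nlinarith
  have h8a : 8 * a^2 = 2 * π^2 / (m:ℝ)^2 := by
    rw [ha]; field_simp; ring
  linarith [hkey, hfin, h8a]
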